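/- If condition (*) holds, then f is strictly convex on the closed ball B̄(a,ρ), and consequently the median set 𝔐_μ has exactly one element (f has a unique minimizer on B̄(a,ρ)). -/

import Mathlib

open MeasureTheory Metric

/-- Euclidean case of Theorem 3.1, uniqueness of the median.
If the support of `μ` is not totally contained in any segment (condition (*)), then
`f` is strictly convex on `B̄(a,ρ)` and has a unique minimizer there. -/
theorem stmt5 {n : ℕ} (hn : 1 ≤ n) (a : EuclideanSpace ℝ (Fin n)) (ρ : ℝ) (hρ : 0 < ρ)
    (μ : Measure (EuclideanSpace ℝ (Fin n))) [IsProbabilityMeasure μ]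
    (hsupp : {x : EuclideanSpace ℝ (Fin n) | ∀ U ∈ nhds x, 0 < μ U} ⊆ ball a ρ)
    (f : EuclideanSpace ℝ (Fin n) → ℝ)
    (hf : ∀ x, f x = ∫ p, ‖x - p‖ ∂μ)
    (hstar : ∀ x ∈ closedBall a ρ, ∀ y ∈ closedBall a ρ, μ (segment ℝ x y) < 1) :
    StrictConvexOn ℝ (closedBall a ρ) f ∧
    ∃! m, m ∈ closedBall a ρ ∧ IsMinOn f (closedBall a ρ) m := by
  -- a.e. point is in the open ball
  have hae : ∀ᵐ p ∂μ, p ∈ ball a ρ := by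
    have hnull : μ {x : EuclideanSpace ℝ (Fin n) | ¬ ∀ U ∈ nhds x, 0 < μ U} = 0 := by
      apply measure_null_of_locally_null
      intro x hx
      simp only [Set.mem_setOf_eq, not_forall, exists_prop] at hx
      obtain ⟨U, hU, hU0⟩ := hx
      exact ⟨U, nhdsWithin_le_nhds hU, le_antisymm (not_lt.1 hU0) (bot_le)⟩
    have h1 : ∀ᵐ p ∂μ, ∀ U ∈ nhds p, 0 < μ U := by
      rw [ae_iff]; exact hnull
    filter_upwards [h1] with p hp using hsupp hp
  -- integrability
  have hint : ∀ x : EuclideanSpace ℝ (Fin n), Integrable (fun p => ‖x - p‖) μ := by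
    intro x
    refine Integrable.mono' (integrable_const (‖x - a‖ + ρ))
      ((continuous_const.sub continuous_id).norm.aestronglyMeasurable) ?_
    filter_upwards [hae] with p hp
    have h1 : x - p = (x - a) + (a - p) := by abel
    rw [Real.norm_eq_abs, abs_norm, h1]
    refine (norm_add_le _ _).trans ?_
    have h2 : ‖a - p‖ < ρ := by rw [← dist_eq_norm, dist_comm]; exact mem_ball.mp hp
    linarith
  -- strict convexity
  have hsc : StrictConvexOn ℝ (closedBall a ρ) f := by
    refine ⟨convex_closedBall a ρ, ?_⟩
    intro x hx y hy hxy s t hs ht hst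
    set z := s • x + t • y with hzdef
    have hzp : ∀ p : EuclideanSpace ℝ (Fin n), z - p = s • (x - p) + t • (y - p) := by
      intro p
      have h1 : s • p + t • p = p := by rw [← add_smul, hst, one_smul]
      calc z - p = s • x + t • y - (s • p + t • p) := by rw [h1]
        _ = s • (x - p) + t • (y - p) := by module
    have hle : ∀ p, ‖z - p‖ ≤ s * ‖x - p‖ + t * ‖y - p‖ := by
      intro p
      rw [hzp p]
      refine (norm_add_le _ _).trans ?_
      rw [norm_smul, norm_smul, Real.norm_eq_abs, Real.norm_eq_abs,
        abs_of_pos hs, abs_of_pos ht]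
    have hgint : Integrable (fun p => ‖z - p‖) μ := hint z
    have hhint : Integrable (fun p => s * ‖x - p‖ + t * ‖y - p‖) μ :=
      ((hint x).const_mul s).add ((hint y).const_mul t)
    have hgap : 0 < ∫ p, (s * ‖x - p‖ + t * ‖y - p‖ - ‖z - p‖) ∂μ := by
      rw [integral_pos_iff_support_of_nonneg_ae
        (Filter.Eventually.of_forall fun p => sub_nonneg.2 (hle p)) (hhint.sub hgint)]
      rw [pos_iff_ne_zero]
      intro h0
      -- then a.e. equality holds
      have heq : ∀ᵐ p ∂μ, ‖z - p‖ = s * ‖x - p‖ + t * ‖y - p‖ := by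
        rw [ae_iff]
        have hset : {p : EuclideanSpace ℝ (Fin n) | ¬ ‖z - p‖ = s * ‖x - p‖ + t * ‖y - p‖}
            = Function.support (fun p => s * ‖x - p‖ + t * ‖y - p‖ - ‖z - p‖) := by
          ext p
          simp only [Set.mem_setOf_eq, Function.mem_support]
          constructor
          · intro h; exact sub_ne_zero.2 fun hh => h hh.symm
          · intro h hh; exact h (by rw [hh]; ring)
        rw [hset]; exact h0
      -- the chord of the ball through x and y
      have hyx : y - x ≠ 0 := sub_ne_zero.2 (Ne.symm hxy)
      set L : ℝ →ᵃ[ℝ] EuclideanSpace ℝ (Fin n) := AffineMap.lineMap x y with hL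
      set T : Set ℝ := L ⁻¹' closedBall a ρ with hT
      have hTconv : Convex ℝ T := (convex_closedBall a ρ).affine_preimage L
      have hLc : Continuous L := AffineMap.lineMap_continuous
      have hTclosed : IsClosed T := IsClosed.preimage hLc Metric.isClosed_closedBall
      have hd : 0 < ‖y - x‖ := norm_pos_iff.2 hyx
      have hTbdd : T ⊆ Set.Icc (-(2 * ρ / ‖y - x‖)) (2 * ρ / ‖y - x‖) := by
        intro r hr
        have h1 : ‖L r - x‖ ≤ 2 * ρ := by
          have h2 : dist (L r) a ≤ ρ := mem_closedBall.mp hr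
          have h3 : dist x a ≤ ρ := mem_closedBall.mp hx
          calc ‖L r - x‖ = dist (L r) x := (dist_eq_norm _ _).symm
            _ ≤ dist (L r) a + dist a x := dist_triangle _ _ _
            _ ≤ ρ + ρ := by rw [dist_comm a x]; exact add_le_add h2 h3
            _ = 2 * ρ := by ring
        have h4 : L r - x = r • (y - x) := by
          rw [hL, AffineMap.lineMap_apply_module']; abel
        rw [h4, norm_smul, Real.norm_eq_abs] at h1
        have h5 : |r| ≤ 2 * ρ / ‖y - x‖ := (le_div_iff₀ hd).2 h1
        exact ⟨neg_le.1 ((neg_le_abs r).trans h5 |> fun h => by linarith [neg_le_abs r, h5]),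
          (le_abs_self r).trans h5⟩
      have hTcompact : IsCompact T :=
        isCompact_Icc.of_isClosed_subset hTclosed hTbdd
      have hT0 : (0 : ℝ) ∈ T := by
        have : L 0 = x := AffineMap.lineMap_apply_zero x y
        show L 0 ∈ closedBall a ρ
        rw [this]; exact hx
      have hTconn : IsConnected T := ⟨⟨0, hT0⟩, hTconv.isPreconnected⟩
      have hIcc : T = Set.Icc (sInf T) (sSup T) := eq_Icc_of_connected_compact hTconn hTcompact
      have huv : sInf T ≤ sSup T := by
        have := hT0; rw [hIcc] at this; exact this.1.trans this.2
      have huT : sInf T ∈ T := hIcc.symm.subset ⟨le_refl _, huv⟩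
      have hvT : sSup T ∈ T := hIcc.symm.subset ⟨huv, le_refl _⟩
      have hLu : L (sInf T) ∈ closedBall a ρ := huT
      have hLv : L (sSup T) ∈ closedBall a ρ := hvT
      -- a.e. point lies in the chord segment
      have hseg : ∀ᵐ p ∂μ, p ∈ segment ℝ (L (sInf T)) (L (sSup T)) := by
        filter_upwards [hae, heq] with p hp hpe
        have h1 : ‖s • (x - p) + t • (y - p)‖ = ‖s • (x - p)‖ + ‖t • (y - p)‖ := by
          rw [← hzp p, hpe, norm_smul, norm_smul, Real.norm_eq_abs, Real.norm_eq_abs,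
            abs_of_pos hs, abs_of_pos ht]
        have h2 : SameRay ℝ (s • (x - p)) (t • (y - p)) := sameRay_iff_norm_add.mpr h1
        have h3 : ∃ r : ℝ, p = L r := by
          rcases h2 with h | h | ⟨r₁, r₂, hr₁, hr₂, hr⟩
          · refine ⟨0, ?_⟩
            have hx0 : x - p = 0 := by
              rcases smul_eq_zero.mp h with h' | h'
              · exact absurd h' hs.ne'
              · exact h'
            rw [hL, AffineMap.lineMap_apply_zero]
            exact (sub_eq_zero.mp hx0).symm
          · refine ⟨1, ?_⟩
            have hy0 : y - p = 0 := by
              rcases smul_eq_zero.mp h with h' | h'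
              · exact absurd h' ht.ne'
              · exact h'
            rw [hL, AffineMap.lineMap_apply_one]
            exact (sub_eq_zero.mp hy0).symm
          · rw [smul_smul, smul_smul] at hr
            set c₁ := r₁ * s with hc₁
            set c₂ := r₂ * t with hc₂
            have hc₁pos : 0 < c₁ := mul_pos hr₁ hs
            have hc₂pos : 0 < c₂ := mul_pos hr₂ ht
            have hne : c₁ ≠ c₂ := by
              intro h'
              apply hxy
              have h'' : c₁ • (x - p) = c₁ • (y - p) := by rw [hr, h']
              have h''' : x - p = y - p := smul_right_injective _ hc₁pos.ne' h''
              exact sub_left_inj.mp h'''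
            have hc : c₂ - c₁ ≠ 0 := sub_ne_zero.2 (Ne.symm hne)
            have key : (c₂ - c₁) • p = c₂ • y - c₁ • x := by
              linear_combination (norm := module) hr
            refine ⟨c₂ / (c₂ - c₁), smul_right_injective _ hc ?_⟩
            show (c₂ - c₁) • p = (c₂ - c₁) • (L (c₂ / (c₂ - c₁)))
            rw [key, hL, AffineMap.lineMap_apply_module', smul_add, smul_smul,
              mul_div_cancel₀ _ hc, smul_sub]
            module
        obtain ⟨r, hrp⟩ := h3
        have hrT : r ∈ T := by
          show L r ∈ closedBall a ρ
          rw [← hrp]; exact ball_subset_closedBall hp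
        have hrT' : r ∈ Set.Icc (sInf T) (sSup T) := hIcc.subset hrT
        rw [← segment_eq_Icc huv] at hrT'
        have himg := image_segment ℝ L (sInf T) (sSup T)
        rw [hrp, ← himg]
        exact ⟨r, hrT', rfl⟩
      -- hence the segment has full measure, contradicting (*)
      have h1le : (1 : ENNReal) ≤ μ (segment ℝ (L (sInf T)) (L (sSup T))) := by
        set S := segment ℝ (L (sInf T)) (L (sSup T)) with hS
        have hcompl : μ Sᶜ = 0 := ae_iff.mp hseg
        calc (1 : ENNReal) = μ Set.univ := measure_univ.symm
          _ = μ (S ∪ Sᶜ) := by rw [Set.union_compl_self]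
          _ ≤ μ S + μ Sᶜ := measure_union_le _ _
          _ = μ S := by rw [hcompl, add_zero]
      exact absurd (hstar _ hLu _ hLv) (not_lt.2 h1le)
    have hint_eq : ∫ p, (s * ‖x - p‖ + t * ‖y - p‖ - ‖z - p‖) ∂μ
        = (s * f x + t * f y) - f z := by
      rw [integral_sub hhint hgint,
        integral_add ((hint x).const_mul s) ((hint y).const_mul t),
        integral_const_mul, integral_const_mul, hf x, hf y, hf z]
    rw [hint_eq] at hgap
    have hlt : f z < s * f x + t * f y := by linarith
    simpa [smul_eq_mul] using hlt
  -- f is 1-Lipschitz, hence continuous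
  have hlip : LipschitzWith 1 f := by
    refine LipschitzWith.of_dist_le_mul fun w v => ?_
    simp only [NNReal.coe_one, one_mul, Real.dist_eq, dist_eq_norm]
    have h1 : f w - f v = ∫ p, (‖w - p‖ - ‖v - p‖) ∂μ := by
      rw [hf w, hf v, integral_sub (hint w) (hint v)]
    rw [h1]
    calc |∫ p, (‖w - p‖ - ‖v - p‖) ∂μ| ≤ ∫ p, |‖w - p‖ - ‖v - p‖| ∂μ := by
          simpa [Real.norm_eq_abs] using
            norm_integral_le_integral_norm (μ := μ) (fun p => ‖w - p‖ - ‖v - p‖)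
      _ ≤ ∫ _p, ‖w - v‖ ∂μ := by
          refine integral_mono ((hint w).sub (hint v)).abs (integrable_const _) fun p => ?_
          have h2 : (w - p) - (v - p) = w - v := by abel
          calc |‖w - p‖ - ‖v - p‖| ≤ ‖(w - p) - (v - p)‖ := abs_norm_sub_norm_le _ _
            _ = ‖w - v‖ := by rw [h2]
      _ = ‖w - v‖ := by simp
  obtain ⟨m, hm, hmin⟩ := (isCompact_closedBall a ρ).exists_isMinOn
    (nonempty_closedBall.mpr hρ.le) hlip.continuous.continuousOn
  exact ⟨hsc, m, ⟨hm, hmin⟩, fun m' hm' => hsc.eq_of_isMinOn hm'.2 hmin hm'.1 hm⟩
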